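/- Let d ≥ 1 and let I ⊂ ℤ^d∖{0} be a finite set which is a generator and satisfies the connectedness condition. Then for every m ∈ ℤ^d, the functions c_m and s_m belong to H_∞(I). -/

import Mathlib

open Real MeasureTheory

/-- ⟨x, m⟩ = ∑ x_j m_j for x ∈ ℝ^d, m ∈ ℤ^d. -/
noncomputable def ip (d : ℕ) (x : Fin d → ℝ) (m : Fin d → ℤ) : ℝ :=
  ∑ j, x j * (m j : ℝ)

/-- Integer inner product on ℤ^d. -/
def ipZ (d : ℕ) (m l : Fin d → ℤ) : ℤ := ∑ j, m j * l j

/-- c_m(x) = cos⟨x,m⟩. -/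
noncomputable def cmap (d : ℕ) (m : Fin d → ℤ) : (Fin d → ℝ) → ℝ :=
  fun x => Real.cos (ip d x m)

/-- s_m(x) = sin⟨x,m⟩. -/
noncomputable def smap (d : ℕ) (m : Fin d → ℤ) : (Fin d → ℝ) → ℝ :=
  fun x => Real.sin (ip d x m)

/-- B(φ)(x) = ∑_j (∂_{x_j} φ(x))². -/
noncomputable def Bop (d : ℕ) (φ : (Fin d → ℝ) → ℝ) : (Fin d → ℝ) → ℝ :=
  fun x => ∑ j, (fderiv ℝ φ x (Pi.single j 1)) ^ 2

/-- Functions representable as θ₀ − ∑_{j=1}^n B(θ_j) with θ's in H, n ≥ 1. -/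
noncomputable def BRep (d : ℕ) (H : Set ((Fin d → ℝ) → ℝ)) : Set ((Fin d → ℝ) → ℝ) :=
  { f | ∃ n : ℕ, 1 ≤ n ∧ ∃ θ₀ ∈ H, ∃ θ : Fin n → (Fin d → ℝ) → ℝ,
      (∀ j, θ j ∈ H) ∧ f = θ₀ - ∑ j, Bop d (θ j) }

/-- F(H): f such that both f and −f are representable. -/
noncomputable def Fop (d : ℕ) (H : Set ((Fin d → ℝ) → ℝ)) : Set ((Fin d → ℝ) → ℝ) :=
  { f | f ∈ BRep d H ∧ -f ∈ BRep d H }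

/-- H(I): span of {1} ∪ {c_k, s_k : k ∈ I}. -/
noncomputable def H0 (d : ℕ) (I : Finset (Fin d → ℤ)) : Set ((Fin d → ℝ) → ℝ) :=
  ↑(Submodule.span ℝ
      ({fun _ => (1:ℝ)} ∪ ⋃ k ∈ (I : Set (Fin d → ℤ)), {cmap d k, smap d k}))

noncomputable def HSeq (d : ℕ) (I : Finset (Fin d → ℤ)) : ℕ → Set ((Fin d → ℝ) → ℝ)
  | 0 => H0 d I
  | j + 1 => Fop d (HSeq d I j)

/-- H_∞(I) = ⋃_j H_j(I). -/
noncomputable def Hinf (d : ℕ) (I : Finset (Fin d → ℤ)) : Set ((Fin d → ℝ) → ℝ) :=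
  ⋃ j, HSeq d I j

/-- I generates ℤ^d over ℤ. -/
def IsGenerator (d : ℕ) (I : Finset (Fin d → ℤ)) : Prop :=
  ∀ n : Fin d → ℤ, ∃ a : (Fin d → ℤ) → ℤ, n = ∑ k ∈ I, a k • k

/-- Connectedness condition of Proposition 2.5. -/
def ConnectedSet (d : ℕ) (I : Finset (Fin d → ℤ)) : Prop :=
  ∀ l ∈ I, ∀ m ∈ I, ∃ k : ℕ, ∃ n : Fin (k + 1) → (Fin d → ℤ),
    (∀ j, n j ∈ I) ∧ ipZ d l (n 0) ≠ 0 ∧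
    (∀ j : Fin k, ipZ d (n j.castSucc) (n j.succ) ≠ 0) ∧
    ipZ d (n (Fin.last k)) m ≠ 0

/-- (2πℤ^d)-periodicity for real-valued functions. -/
def Periodic2pi (d : ℕ) (f : (Fin d → ℝ) → ℝ) : Prop :=
  ∀ (x : Fin d → ℝ) (k : Fin d → ℤ), f (x + fun j => 2 * Real.pi * (k j : ℝ)) = f x

noncomputable def ipL (d : ℕ) (m : Fin d → ℤ) : (Fin d → ℝ) →L[ℝ] ℝ :=
  ∑ j, (m j : ℝ) • ContinuousLinearMap.proj j

lemma ipL_apply (d : ℕ) (m : Fin d → ℤ) (x : Fin d → ℝ) : ipL d m x = ip d x m := by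
  simp [ipL, ip, mul_comm]

lemma ipL_single (d : ℕ) (m : Fin d → ℤ) (j : Fin d) :
    ipL d m (Pi.single j 1) = (m j : ℝ) := by
  rw [ipL_apply]
  simp [ip, Pi.single_apply]

lemma hasFDerivAt_ip (d : ℕ) (m : Fin d → ℤ) (x : Fin d → ℝ) :
    HasFDerivAt (fun y => ip d y m) (ipL d m) x := by
  have h := (ipL d m).hasFDerivAt (x := x)
  convert h using 1
  ext y
  rw [ipL_apply]

/-- a c_k + b s_k + a' c_l + b' s_l. -/
noncomputable def phi (d : ℕ) (k l : Fin d → ℤ) (a b a' b' : ℝ) : (Fin d → ℝ) → ℝ :=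
  fun x => a * Real.cos (ip d x k) + b * Real.sin (ip d x k)
    + a' * Real.cos (ip d x l) + b' * Real.sin (ip d x l)

lemma hasFDerivAt_phi (d : ℕ) (k l : Fin d → ℤ) (a b a' b' : ℝ) (x : Fin d → ℝ) :
    HasFDerivAt (phi d k l a b a' b')
      (((-a * Real.sin (ip d x k) + b * Real.cos (ip d x k)) • ipL d k)
        + ((-a' * Real.sin (ip d x l) + b' * Real.cos (ip d x l)) • ipL d l)) x := by
  have hk := hasFDerivAt_ip d k x
  have hl := hasFDerivAt_ip d l x
  have h1 : HasFDerivAt (fun y => Real.cos (ip d y k))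
      ((-Real.sin (ip d x k)) • ipL d k) x :=
    by have := (Real.hasDerivAt_cos (ip d x k)).comp_hasFDerivAt x hk; exact this
  have h2 : HasFDerivAt (fun y => Real.sin (ip d y k))
      ((Real.cos (ip d x k)) • ipL d k) x :=
    by have := (Real.hasDerivAt_sin (ip d x k)).comp_hasFDerivAt x hk; exact this
  have h3 : HasFDerivAt (fun y => Real.cos (ip d y l))
      ((-Real.sin (ip d x l)) • ipL d l) x :=
    by have := (Real.hasDerivAt_cos (ip d x l)).comp_hasFDerivAt x hl; exact this
  have h4 : HasFDerivAt (fun y => Real.sin (ip d y l))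
      ((Real.cos (ip d x l)) • ipL d l) x :=
    by have := (Real.hasDerivAt_sin (ip d x l)).comp_hasFDerivAt x hl; exact this
  have := (((h1.const_mul a).add (h2.const_mul b)).add (h3.const_mul a')).add (h4.const_mul b')
  refine this.congr_fderiv ?_
  ext y
  simp [ContinuousLinearMap.smul_apply]
  ring

lemma ipZ_cast (d : ℕ) (k l : Fin d → ℤ) :
    ((ipZ d k l : ℤ) : ℝ) = ∑ j, (k j : ℝ) * (l j : ℝ) := by
  push_cast [ipZ]; rfl

lemma Bop_phi (d : ℕ) (k l : Fin d → ℤ) (a b a' b' : ℝ) (x : Fin d → ℝ) :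
    Bop d (phi d k l a b a' b') x =
      (-a * Real.sin (ip d x k) + b * Real.cos (ip d x k))^2 * (ipZ d k k : ℝ)
      + 2 * (-a * Real.sin (ip d x k) + b * Real.cos (ip d x k))
          * (-a' * Real.sin (ip d x l) + b' * Real.cos (ip d x l)) * (ipZ d k l : ℝ)
      + (-a' * Real.sin (ip d x l) + b' * Real.cos (ip d x l))^2 * (ipZ d l l : ℝ) := by
  set P := -a * Real.sin (ip d x k) + b * Real.cos (ip d x k) with hP
  set Q := -a' * Real.sin (ip d x l) + b' * Real.cos (ip d x l) with hQ
  have hD := (hasFDerivAt_phi d k l a b a' b' x).fderiv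
  unfold Bop
  rw [hD]
  have : ∀ j, ((P • ipL d k + Q • ipL d l) (Pi.single j 1))^2
      = P^2 * ((k j:ℝ)*(k j:ℝ)) + 2*P*Q*((k j:ℝ)*(l j:ℝ)) + Q^2 * ((l j:ℝ)*(l j:ℝ)) := by
    intro j
    have h : (P • ipL d k + Q • ipL d l) (Pi.single j 1) = P * (k j:ℝ) + Q * (l j:ℝ) := by
      simp [ContinuousLinearMap.smul_apply, ipL_single]
    rw [h]; ring
  rw [Finset.sum_congr rfl (fun j _ => this j)]
  rw [Finset.sum_add_distrib, Finset.sum_add_distrib, ← Finset.mul_sum, ← Finset.mul_sum,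
    ← Finset.mul_sum]
  simp only [ipZ_cast]
  try ring

lemma ip_sub (d : ℕ) (x : Fin d → ℝ) (k l : Fin d → ℤ) :
    ip d x (k - l) = ip d x k - ip d x l := by
  unfold ip
  rw [← Finset.sum_sub_distrib]
  apply Finset.sum_congr rfl
  intro j _
  push_cast [Pi.sub_apply]
  ring

lemma ip_neg (d : ℕ) (x : Fin d → ℝ) (l : Fin d → ℤ) : ip d x (-l) = - ip d x l := by
  unfold ip
  rw [← Finset.sum_neg_distrib]
  apply Finset.sum_congr rfl
  intro j _
  push_cast [Pi.neg_apply]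
  ring

lemma master (d : ℕ) (k l : Fin d → ℤ) (a b a' b' : ℝ) (x : Fin d → ℝ) :
    Bop d (phi d k l a b a' b') x + Bop d (phi d k l b (-a) b' (-a')) x
      = (a^2+b^2) * (ipZ d k k : ℝ) + (a'^2+b'^2) * (ipZ d l l : ℝ)
        + 2 * (ipZ d k l : ℝ) * ((a*a'+b*b') * Real.cos (ip d x k - ip d x l)
            + (b*a'-a*b') * Real.sin (ip d x k - ip d x l)) := by
  rw [Bop_phi, Bop_phi, Real.cos_sub, Real.sin_sub]
  have h1 := Real.sin_sq_add_cos_sq (ip d x k)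
  have h2 := Real.sin_sq_add_cos_sq (ip d x l)
  linear_combination (a^2+b^2) * (ipZ d k k : ℝ) * h1 + (a'^2+b'^2) * (ipZ d l l : ℝ) * h2

lemma fderiv_csmul (d : ℕ) (c : ℝ) (f : (Fin d → ℝ) → ℝ) (x : Fin d → ℝ) :
    fderiv ℝ (c • f) x = c • fderiv ℝ f x := by
  by_cases hc : c = 0
  · subst hc
    have : (0:ℝ) • f = fun _ => (0:ℝ) := by funext y; simp
    rw [this]
    simp [fderiv_const]
  by_cases hf : DifferentiableAt ℝ f x
  · exact fderiv_const_smul hf c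
  · have hcf : ¬ DifferentiableAt ℝ (c • f) x := by
      intro H
      apply hf
      have h2 := H.const_smul c⁻¹
      have he : (fun y => c⁻¹ • (c • f) y) = f := by
        funext y
        simp only [Pi.smul_apply, smul_eq_mul]
        field_simp
      rw [smul_smul, inv_mul_cancel₀ hc, one_smul] at h2; exact h2
    rw [fderiv_zero_of_not_differentiableAt hf, fderiv_zero_of_not_differentiableAt hcf,
      smul_zero]

lemma Bop_smul (d : ℕ) (c : ℝ) (f : (Fin d → ℝ) → ℝ) (x : Fin d → ℝ) :
    Bop d (c • f) x = c^2 * Bop d f x := by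
  unfold Bop
  rw [fderiv_csmul, Finset.mul_sum]
  apply Finset.sum_congr rfl
  intro j _
  rw [ContinuousLinearMap.smul_apply]
  simp [smul_eq_mul]
  ring

lemma Bop_const (d : ℕ) (r : ℝ) (x : Fin d → ℝ) : Bop d (fun _ => r) x = 0 := by
  unfold Bop
  simp [fderiv_const]

lemma const_mem {d : ℕ} (M : Submodule ℝ ((Fin d → ℝ) → ℝ)) (h1 : (fun _ => (1:ℝ)) ∈ M)
    (r : ℝ) : (fun _ : Fin d → ℝ => r) ∈ M := by
  have : (fun _ : Fin d → ℝ => r) = r • (fun _ : Fin d → ℝ => (1:ℝ)) := by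
    funext y; simp
  rw [this]
  exact M.smul_mem r h1

lemma brep_self {d : ℕ} (M : Submodule ℝ ((Fin d → ℝ) → ℝ)) (h1 : (fun _ => (1:ℝ)) ∈ M)
    {f : (Fin d → ℝ) → ℝ} (hf : f ∈ M) : f ∈ BRep d ↑M := by
  refine ⟨1, le_refl 1, f, hf, fun _ => (fun _ => (0:ℝ)), fun _ => const_mem M h1 0, ?_⟩
  funext x
  simp [Bop_const]

lemma brep_two {d : ℕ} (M : Submodule ℝ ((Fin d → ℝ) → ℝ)) (h1 : (fun _ => (1:ℝ)) ∈ M)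
    {u v : (Fin d → ℝ) → ℝ} (hu : u ∈ M) (hv : v ∈ M) (C : ℝ)
    {f : (Fin d → ℝ) → ℝ} (hf : ∀ x, f x = C - Bop d u x - Bop d v x) :
    f ∈ BRep d ↑M := by
  refine ⟨2, by norm_num, fun _ => C, const_mem M h1 C, ![u, v], ?_, ?_⟩
  · intro j; fin_cases j <;> simpa
  · funext x
    have := hf x
    simp only [Pi.sub_apply, Finset.sum_apply, Fin.sum_univ_two]
    simpa [sub_sub] using this

lemma brep_add {d : ℕ} (M : Submodule ℝ ((Fin d → ℝ) → ℝ))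
    {f g : (Fin d → ℝ) → ℝ} (hf : f ∈ BRep d ↑M) (hg : g ∈ BRep d ↑M) :
    f + g ∈ BRep d ↑M := by
  obtain ⟨n, hn, θ₀, hθ₀, θ, hθ, hrep⟩ := hf
  obtain ⟨n', hn', θ₀', hθ₀', θ', hθ', hrep'⟩ := hg
  refine ⟨n + n', le_add_right hn, θ₀ + θ₀', M.add_mem hθ₀ hθ₀', Fin.append θ θ', ?_, ?_⟩
  · intro j
    refine Fin.addCases (motive := fun j => Fin.append θ θ' j ∈ (M : Set _))
      (fun i => ?_) (fun i => ?_) j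
    · show Fin.append θ θ' (Fin.castAdd n' i) ∈ (M : Set _)
      rw [Fin.append_left]; exact hθ i
    · show Fin.append θ θ' (Fin.natAdd n i) ∈ (M : Set _)
      rw [Fin.append_right]; exact hθ' i
  · have hsum : ∑ j, Bop d (Fin.append θ θ' j)
        = (∑ j, Bop d (θ j)) + ∑ j, Bop d (θ' j) := by
      rw [Fin.sum_univ_add]
      simp [Fin.append_left, Fin.append_right]
    rw [hrep, hrep', hsum]
    abel

lemma brep_smul_nonneg {d : ℕ} (M : Submodule ℝ ((Fin d → ℝ) → ℝ))
    {c : ℝ} (hc : 0 ≤ c) {f : (Fin d → ℝ) → ℝ} (hf : f ∈ BRep d ↑M) :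
    c • f ∈ BRep d ↑M := by
  obtain ⟨n, hn, θ₀, hθ₀, θ, hθ, hrep⟩ := hf
  refine ⟨n, hn, c • θ₀, M.smul_mem c hθ₀, fun j => Real.sqrt c • θ j,
    fun j => M.smul_mem _ (hθ j), ?_⟩
  funext x
  have h2 : ∀ j, Bop d (Real.sqrt c • θ j) x = c * Bop d (θ j) x := by
    intro j
    rw [Bop_smul, Real.sq_sqrt hc]
  have h3 := congrFun hrep x
  simp only [Pi.sub_apply, Pi.smul_apply, Finset.sum_apply, smul_eq_mul] at h3 ⊢
  rw [Finset.sum_congr rfl (fun j _ => h2 j), ← Finset.mul_sum, h3]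
  ring

def GoodH (d : ℕ) (H : Set ((Fin d → ℝ) → ℝ)) : Prop :=
  ∃ M : Submodule ℝ ((Fin d → ℝ) → ℝ), H = ↑M ∧ (fun _ => (1:ℝ)) ∈ M

lemma brep_const {d : ℕ} (M : Submodule ℝ ((Fin d → ℝ) → ℝ)) (h1 : (fun _ => (1:ℝ)) ∈ M)
    (r : ℝ) : (fun _ : Fin d → ℝ => r) ∈ BRep d ↑M :=
  brep_self M h1 (const_mem M h1 r)

lemma fop_good {d : ℕ} {H : Set ((Fin d → ℝ) → ℝ)} (hH : GoodH d H) :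
    GoodH d (Fop d H) := by
  obtain ⟨M, rfl, h1⟩ := hH
  refine ⟨{ carrier := Fop d ↑M
            add_mem' := ?_
            zero_mem' := ?_
            smul_mem' := ?_ }, rfl, ?_, ?_⟩
  · rintro f g ⟨hf1, hf2⟩ ⟨hg1, hg2⟩
    exact ⟨brep_add M hf1 hg1, by rw [neg_add]; exact brep_add M hf2 hg2⟩
  · constructor
    · have : (0 : (Fin d → ℝ) → ℝ) = fun _ => (0:ℝ) := rfl
      rw [this]; exact brep_const M h1 0
    · have : (-0 : (Fin d → ℝ) → ℝ) = fun _ => (0:ℝ) := by funext x; simp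
      rw [this]; exact brep_const M h1 0
  · rintro c f ⟨hf1, hf2⟩
    rcases le_or_gt 0 c with hc | hc
    · refine ⟨brep_smul_nonneg M hc hf1, ?_⟩
      have : -(c • f) = c • (-f) := by rw [smul_neg]
      rw [this]; exact brep_smul_nonneg M hc hf2
    · have h1' : c • f = (-c) • (-f) := by rw [smul_neg, neg_smul, neg_neg]
      have h2' : -(c • f) = (-c) • f := by rw [neg_smul]
      constructor
      · rw [h1']; exact brep_smul_nonneg M (by linarith) hf2
      · rw [h2']; exact brep_smul_nonneg M (by linarith) hf1
  · exact brep_const M h1 1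
  · have h2 : -(fun _ : Fin d → ℝ => (1:ℝ)) = fun _ => (-1:ℝ) := by funext x; simp
    show -(fun _ : Fin d → ℝ => (1:ℝ)) ∈ BRep d ↑M
    rw [h2]; exact brep_const M h1 (-1)

lemma good_H0 (d : ℕ) (I : Finset (Fin d → ℤ)) : GoodH d (H0 d I) :=
  ⟨_, rfl, Submodule.subset_span (Or.inl rfl)⟩

lemma good_HSeq (d : ℕ) (I : Finset (Fin d → ℤ)) : ∀ j, GoodH d (HSeq d I j)
  | 0 => good_H0 d I
  | j + 1 => fop_good (good_HSeq d I j)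

lemma subset_fop {d : ℕ} {H : Set ((Fin d → ℝ) → ℝ)} (hH : GoodH d H) : H ⊆ Fop d H := by
  obtain ⟨M, rfl, h1⟩ := hH
  intro f hf
  exact ⟨brep_self M h1 hf, brep_self M h1 (M.neg_mem hf)⟩

lemma HSeq_mono (d : ℕ) (I : Finset (Fin d → ℤ)) {i j : ℕ} (hij : i ≤ j) :
    HSeq d I i ⊆ HSeq d I j := by
  induction j with
  | zero => simp_all
  | succ j ih =>
    rcases Nat.eq_or_lt_of_le hij with rfl | h
    · exact le_refl _
    · exact (ih (Nat.lt_succ_iff.mp h)).trans (subset_fop (good_HSeq d I j))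

lemma phi_mem {d : ℕ} (M : Submodule ℝ ((Fin d → ℝ) → ℝ)) {k l : Fin d → ℤ}
    (hck : cmap d k ∈ M) (hsk : smap d k ∈ M) (hcl : cmap d l ∈ M) (hsl : smap d l ∈ M)
    (a b a' b' : ℝ) : phi d k l a b a' b' ∈ M := by
  have : phi d k l a b a' b'
      = a • cmap d k + b • smap d k + a' • cmap d l + b' • smap d l := by
    funext x
    simp [phi, cmap, smap]
  rw [this]
  exact M.add_mem (M.add_mem (M.add_mem (M.smul_mem a hck) (M.smul_mem b hsk))
    (M.smul_mem a' hcl)) (M.smul_mem b' hsl)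

lemma W_brep {d : ℕ} (M : Submodule ℝ ((Fin d → ℝ) → ℝ)) (h1 : (fun _ => (1:ℝ)) ∈ M)
    {k l : Fin d → ℤ}
    (hck : cmap d k ∈ M) (hsk : smap d k ∈ M) (hcl : cmap d l ∈ M) (hsl : smap d l ∈ M)
    (a b a' b' : ℝ) :
    (fun x => -(2*(ipZ d k l : ℝ)) * ((a*a'+b*b') * Real.cos (ip d x k - ip d x l)
        + (b*a'-a*b') * Real.sin (ip d x k - ip d x l))) ∈ BRep d ↑M := by
  refine brep_two M h1 (phi_mem M hck hsk hcl hsl a b a' b')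
    (phi_mem M hck hsk hcl hsl b (-a) b' (-a'))
    ((a^2+b^2) * (ipZ d k k : ℝ) + (a'^2+b'^2) * (ipZ d l l : ℝ)) (fun x => ?_)
  have hm := master d k l a b a' b' x
  linarith

lemma key_sub {d : ℕ} (M : Submodule ℝ ((Fin d → ℝ) → ℝ)) (h1 : (fun _ => (1:ℝ)) ∈ M)
    {k l : Fin d → ℤ}
    (hck : cmap d k ∈ M) (hsk : smap d k ∈ M) (hcl : cmap d l ∈ M) (hsl : smap d l ∈ M)
    (hR : ipZ d k l ≠ 0) :
    cmap d (k - l) ∈ Fop d ↑M ∧ smap d (k - l) ∈ Fop d ↑M := by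
  have hRr : (ipZ d k l : ℝ) ≠ 0 := Int.cast_ne_zero.mpr hR
  set R : ℝ := (ipZ d k l : ℝ) with hRdef
  have hc : ∀ s : ℝ, (fun x => s * Real.cos (ip d x k - ip d x l)) ∈ BRep d ↑M := by
    intro s
    have := W_brep M h1 hck hsk hcl hsl 1 0 (-(s/(2*R))) 0
    convert this using 2 with x
    field_simp
    try ring
  have hs : ∀ s : ℝ, (fun x => s * Real.sin (ip d x k - ip d x l)) ∈ BRep d ↑M := by
    intro s
    have := W_brep M h1 hck hsk hcl hsl 1 0 0 (s/(2*R))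
    convert this using 2 with x
    field_simp
    try ring
  have hmcs : ∀ x, ip d x (k - l) = ip d x k - ip d x l := fun x => ip_sub d x k l
  constructor
  · constructor
    · have := hc 1
      convert this using 1
      funext x; simp [cmap, hmcs]
    · have := hc (-1)
      convert this using 1
      funext x; simp [cmap, hmcs]
  · constructor
    · have := hs 1
      convert this using 1
      funext x; simp [smap, hmcs]
    · have := hs (-1)
      convert this using 1
      funext x; simp [smap, hmcs]

lemma ipZ_neg (d : ℕ) (k l : Fin d → ℤ) : ipZ d k (-l) = - ipZ d k l := by
  unfold ipZ
  rw [← Finset.sum_neg_distrib]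
  apply Finset.sum_congr rfl
  intro j _
  simp [Pi.neg_apply]

lemma cmap_neg (d : ℕ) (l : Fin d → ℤ) : cmap d (-l) = cmap d l := by
  funext x; simp [cmap, ip_neg]

lemma smap_neg (d : ℕ) (l : Fin d → ℤ) : smap d (-l) = -smap d l := by
  funext x; simp [smap, ip_neg]

lemma key_add {d : ℕ} (M : Submodule ℝ ((Fin d → ℝ) → ℝ)) (h1 : (fun _ => (1:ℝ)) ∈ M)
    {k l : Fin d → ℤ}
    (hck : cmap d k ∈ M) (hsk : smap d k ∈ M) (hcl : cmap d l ∈ M) (hsl : smap d l ∈ M)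
    (hR : ipZ d k l ≠ 0) :
    cmap d (k + l) ∈ Fop d ↑M ∧ smap d (k + l) ∈ Fop d ↑M := by
  have hcl' : cmap d (-l) ∈ M := by rw [cmap_neg]; exact hcl
  have hsl' : smap d (-l) ∈ M := by rw [smap_neg]; exact M.neg_mem hsl
  have hR' : ipZ d k (-l) ≠ 0 := by rw [ipZ_neg]; exact neg_ne_zero.mpr hR
  have := key_sub M h1 hck hsk hcl' hsl' hR'
  rwa [sub_neg_eq_add] at this

lemma ipZ_comm (d : ℕ) (a b : Fin d → ℤ) : ipZ d a b = ipZ d b a := by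
  unfold ipZ
  apply Finset.sum_congr rfl
  intro j _
  ring

lemma ipZ_add_left (d : ℕ) (a b c : Fin d → ℤ) :
    ipZ d (a + b) c = ipZ d a c + ipZ d b c := by
  unfold ipZ
  rw [← Finset.sum_add_distrib]
  apply Finset.sum_congr rfl
  intro j _
  simp [Pi.add_apply]
  ring

lemma ipZ_smul_left (d : ℕ) (q : ℤ) (a c : Fin d → ℤ) :
    ipZ d (q • a) c = q * ipZ d a c := by
  unfold ipZ
  rw [Finset.mul_sum]
  apply Finset.sum_congr rfl
  intro j _
  simp [Pi.smul_apply]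
  ring

lemma ipZ_smul_right (d : ℕ) (q : ℤ) (a c : Fin d → ℤ) :
    ipZ d a (q • c) = q * ipZ d a c := by
  rw [ipZ_comm, ipZ_smul_left, ipZ_comm d c a]

lemma ipZ_self_pos (d : ℕ) {k : Fin d → ℤ} (hk : k ≠ 0) : 0 < ipZ d k k := by
  rcases Function.ne_iff.mp hk with ⟨j, hj⟩
  have : (0:ℤ) < k j * k j := mul_self_pos.mpr hj
  calc (0:ℤ) < k j * k j := this
    _ ≤ ∑ i, k i * k i := by
        apply Finset.single_le_sum (f := fun i => k i * k i)
        · intro i _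
          exact mul_self_nonneg _
        · exact Finset.mem_univ j

lemma ipZ_self_eq_zero (d : ℕ) {k : Fin d → ℤ} (h : ipZ d k k = 0) : k = 0 := by
  by_contra hk
  exact absurd h (ne_of_gt (ipZ_self_pos d hk))

/-- The set of frequencies m whose cos and sin lie in some H_j. -/
def Sgood (d : ℕ) (I : Finset (Fin d → ℤ)) : Set (Fin d → ℤ) :=
  {m | ∃ j, cmap d m ∈ HSeq d I j ∧ smap d m ∈ HSeq d I j}

lemma S_zero (d : ℕ) (I : Finset (Fin d → ℤ)) : (0 : Fin d → ℤ) ∈ Sgood d I := by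
  obtain ⟨M, hM, h1⟩ := good_H0 d I
  refine ⟨0, ?_, ?_⟩
  · show cmap d 0 ∈ H0 d I
    rw [hM]
    have : cmap d 0 = fun _ => (1:ℝ) := by
      funext x; simp [cmap, ip]
    rw [this]; exact h1
  · show smap d 0 ∈ H0 d I
    rw [hM]
    have : smap d 0 = fun _ => (0:ℝ) := by
      funext x; simp [smap, ip]
    rw [this]; exact const_mem M h1 0

lemma S_base (d : ℕ) (I : Finset (Fin d → ℤ)) {k : Fin d → ℤ} (hk : k ∈ I) :
    k ∈ Sgood d I := by
  refine ⟨0, ?_, ?_⟩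
  · show cmap d k ∈ H0 d I
    apply Submodule.subset_span
    right
    simp only [Set.mem_iUnion]
    exact ⟨k, hk, by simp⟩
  · show smap d k ∈ H0 d I
    apply Submodule.subset_span
    right
    simp only [Set.mem_iUnion]
    exact ⟨k, hk, by simp⟩

lemma S_neg (d : ℕ) (I : Finset (Fin d → ℤ)) {m : Fin d → ℤ} (hm : m ∈ Sgood d I) :
    -m ∈ Sgood d I := by
  obtain ⟨j, hc, hs⟩ := hm
  obtain ⟨M, hM, h1⟩ := good_HSeq d I j
  rw [hM] at hc hs
  refine ⟨j, ?_, ?_⟩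
  · rw [hM, cmap_neg]; exact hc
  · rw [hM, smap_neg]
    exact M.neg_mem hs

lemma S_add (d : ℕ) (I : Finset (Fin d → ℤ)) {a b : Fin d → ℤ}
    (ha : a ∈ Sgood d I) (hb : b ∈ Sgood d I) (hab : ipZ d a b ≠ 0) :
    a + b ∈ Sgood d I := by
  obtain ⟨j1, hc1, hs1⟩ := ha
  obtain ⟨j2, hc2, hs2⟩ := hb
  set j := max j1 j2
  obtain ⟨M, hM, h1⟩ := good_HSeq d I j
  have hc1' : cmap d a ∈ M := by
    have h := HSeq_mono d I (le_max_left j1 j2) hc1; rw [hM] at h; exact h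
  have hs1' : smap d a ∈ M := by
    have h := HSeq_mono d I (le_max_left j1 j2) hs1; rw [hM] at h; exact h
  have hc2' : cmap d b ∈ M := by
    have h := HSeq_mono d I (le_max_right j1 j2) hc2; rw [hM] at h; exact h
  have hs2' : smap d b ∈ M := by
    have h := HSeq_mono d I (le_max_right j1 j2) hs2; rw [hM] at h; exact h
  have := key_add M h1 hc1' hs1' hc2' hs2' hab
  refine ⟨j + 1, ?_, ?_⟩
  · show cmap d (a + b) ∈ Fop d (HSeq d I j)
    rw [hM]; exact this.1
  · show smap d (a + b) ∈ Fop d (HSeq d I j)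
    rw [hM]; exact this.2

lemma S_sub (d : ℕ) (I : Finset (Fin d → ℤ)) {a b : Fin d → ℤ}
    (ha : a ∈ Sgood d I) (hb : b ∈ Sgood d I) (hab : ipZ d a b ≠ 0) :
    a - b ∈ Sgood d I := by
  obtain ⟨j1, hc1, hs1⟩ := ha
  obtain ⟨j2, hc2, hs2⟩ := hb
  set j := max j1 j2
  obtain ⟨M, hM, h1⟩ := good_HSeq d I j
  have hc1' : cmap d a ∈ M := by
    have h := HSeq_mono d I (le_max_left j1 j2) hc1; rw [hM] at h; exact h
  have hs1' : smap d a ∈ M := by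
    have h := HSeq_mono d I (le_max_left j1 j2) hs1; rw [hM] at h; exact h
  have hc2' : cmap d b ∈ M := by
    have h := HSeq_mono d I (le_max_right j1 j2) hc2; rw [hM] at h; exact h
  have hs2' : smap d b ∈ M := by
    have h := HSeq_mono d I (le_max_right j1 j2) hs2; rw [hM] at h; exact h
  have := key_sub M h1 hc1' hs1' hc2' hs2' hab
  refine ⟨j + 1, ?_, ?_⟩
  · show cmap d (a - b) ∈ Fop d (HSeq d I j)
    rw [hM]; exact this.1
  · show smap d (a - b) ∈ Fop d (HSeq d I j)
    rw [hM]; exact this.2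

lemma S_smul (d : ℕ) (I : Finset (Fin d → ℤ)) {p : Fin d → ℤ} (hp0 : p ≠ 0)
    (hp : p ∈ Sgood d I) : ∀ q : ℤ, q • p ∈ Sgood d I := by
  have hpp : ipZ d p p ≠ 0 := ne_of_gt (ipZ_self_pos d hp0)
  have hnat : ∀ n : ℕ, (n : ℤ) • p ∈ Sgood d I := by
    intro n
    induction n with
    | zero => simpa using S_zero d I
    | succ n ih =>
      rcases Nat.eq_zero_or_pos n with rfl | hn
      · simpa using hp
      · have h1 : ((n:ℤ) • p) + p ∈ Sgood d I := by
          apply S_add d I ih hp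
          rw [ipZ_smul_left]
          have hnz : (n:ℤ) ≠ 0 := by exact_mod_cast Nat.pos_iff_ne_zero.mp hn
          exact mul_ne_zero hnz hpp
        have : ((n+1 : ℕ) : ℤ) • p = ((n:ℤ) • p) + p := by
          push_cast
          rw [add_smul, one_smul]
        rwa [this]
  intro q
  rcases le_or_gt 0 q with hq | hq
  · obtain ⟨n, rfl⟩ := Int.eq_ofNat_of_zero_le hq
    exact hnat n
  · have : q • p = -((-q) • p) := by rw [neg_smul, neg_neg]
    rw [this]
    apply S_neg
    obtain ⟨n, hn⟩ := Int.eq_ofNat_of_zero_le (by linarith : (0:ℤ) ≤ -q)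
    rw [hn]
    exact hnat n

lemma exists_q (A B C D : ℤ) (hB : B ≠ 0) (hD : D ≠ 0) :
    ∃ q : ℤ, q ≠ 0 ∧ A + q * B ≠ 0 ∧ C + q * D ≠ 0 := by
  by_cases h1a : A + 1 * B = 0
  · by_cases h2c : C + 2 * D = 0
    · exact ⟨3, by norm_num, by omega, by omega⟩
    · by_cases h2a : A + 2 * B = 0
      · omega
      · exact ⟨2, two_ne_zero, h2a, h2c⟩
  · by_cases h1c : C + 1 * D = 0
    · by_cases h2a : A + 2 * B = 0
      · exact ⟨3, by norm_num, by omega, by omega⟩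
      · exact ⟨2, two_ne_zero, h2a, by omega⟩
    · exact ⟨1, one_ne_zero, h1a, h1c⟩

lemma sub_step (d : ℕ) (I : Finset (Fin d → ℤ)) {m t p : Fin d → ℤ} {q : ℤ}
    (hmem : m + q • p + t ∈ Sgood d I) (hqp : q • p ∈ Sgood d I)
    (hnz : ipZ d (m + q • p + t) (q • p) ≠ 0) : m + t ∈ Sgood d I := by
  have h := S_sub d I hmem hqp hnz
  have he : m + q • p + t - q • p = m + t := by abel
  rwa [he] at h

lemma walk (d : ℕ) (I : Finset (Fin d → ℤ)) (hI : ∀ k ∈ I, k ≠ 0) :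
    ∀ (kk : ℕ) (n : Fin (kk+1) → (Fin d → ℤ)), (∀ j, n j ∈ I) →
    ∀ m t : Fin d → ℤ, m ∈ Sgood d I → t ∈ Sgood d I →
    ipZ d m (n 0) ≠ 0 →
    (∀ j : Fin kk, ipZ d (n j.castSucc) (n j.succ) ≠ 0) →
    ipZ d (n (Fin.last kk)) t ≠ 0 →
    m + t ∈ Sgood d I := by
  intro kk
  induction kk with
  | zero =>
    intro n hnI m t hm ht h0 _ hlast
    set p := n 0 with hp
    have hlast' : ipZ d p t ≠ 0 := by
      have : (Fin.last 0) = (0 : Fin 1) := rfl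
      rwa [this] at hlast
    have hp0 : p ≠ 0 := hI p (hnI 0)
    have hpS : p ∈ Sgood d I := S_base d I (hnI 0)
    have hpp : ipZ d p p ≠ 0 := ne_of_gt (ipZ_self_pos d hp0)
    obtain ⟨q, hq0, hq1, hq2⟩ := exists_q (ipZ d m t) (ipZ d p t)
      (ipZ d m p + ipZ d t p) (ipZ d p p) hlast' hpp
    have hqpS : q • p ∈ Sgood d I := S_smul d I hp0 hpS q
    have hm1 : m + q • p ∈ Sgood d I := by
      apply S_add d I hm hqpS
      rw [ipZ_smul_right]
      exact mul_ne_zero hq0 h0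
    have hm2 : m + q • p + t ∈ Sgood d I := by
      apply S_add d I hm1 ht
      rw [ipZ_add_left, ipZ_smul_left]
      exact hq1
    apply sub_step d I hm2 hqpS
    rw [ipZ_smul_right, ipZ_add_left, ipZ_add_left, ipZ_smul_left]
    have he : ipZ d m p + q * ipZ d p p + ipZ d t p
        = ipZ d m p + ipZ d t p + q * ipZ d p p := by ring
    rw [he]
    exact mul_ne_zero hq0 hq2
  | succ kk ih =>
    intro n hnI m t hm ht h0 hcons hlast
    set p := n 0 with hp
    have hp0 : p ≠ 0 := hI p (hnI 0)
    have hpS : p ∈ Sgood d I := S_base d I (hnI 0)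
    have hpp : ipZ d p p ≠ 0 := ne_of_gt (ipZ_self_pos d hp0)
    have hB : ipZ d p (n ((0 : Fin (kk+1)).succ)) ≠ 0 := by
      have := hcons 0
      rwa [show ((0 : Fin (kk+1)).castSucc) = (0 : Fin (kk+2)) from rfl] at this
    obtain ⟨q, hq0, hq1, hq2⟩ := exists_q (ipZ d m (n ((0 : Fin (kk+1)).succ)))
        (ipZ d p (n ((0 : Fin (kk+1)).succ)))
        (ipZ d m p + ipZ d t p) (ipZ d p p) hB hpp
    have hqpS : q • p ∈ Sgood d I := S_smul d I hp0 hpS q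
    have hm1 : m + q • p ∈ Sgood d I := by
      apply S_add d I hm hqpS
      rw [ipZ_smul_right]
      exact mul_ne_zero hq0 h0
    have hm2 : (m + q • p) + t ∈ Sgood d I := by
      apply ih (fun i => n i.succ) (fun i => hnI i.succ) (m + q • p) t hm1 ht
      · rw [ipZ_add_left, ipZ_smul_left]
        exact hq1
      · intro j
        have h := hcons j.succ
        have he2 : (j.succ).castSucc = (j.castSucc).succ := (Fin.succ_castSucc j).symm
        rwa [he2] at h
      · have he3 : (Fin.last kk).succ = Fin.last (kk+1) := Fin.succ_last kk
        rw [he3]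
        exact hlast
    apply sub_step d I hm2 hqpS
    rw [ipZ_smul_right, ipZ_add_left, ipZ_add_left, ipZ_smul_left]
    have he : ipZ d m p + q * ipZ d p p + ipZ d t p
        = ipZ d m p + ipZ d t p + q * ipZ d p p := by ring
    rw [he]
    exact mul_ne_zero hq0 hq2

lemma ipZ_sum_right (d : ℕ) (m : Fin d → ℤ) (s : Finset (Fin d → ℤ)) (a : (Fin d → ℤ) → ℤ) :
    ipZ d m (∑ k ∈ s, a k • k) = ∑ k ∈ s, a k * ipZ d m k := by
  unfold ipZ
  have h1 : ∀ j, m j * (∑ k ∈ s, a k • k) j = ∑ k ∈ s, m j * (a k * k j) := by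
    intro j
    rw [Finset.sum_apply]
    rw [Finset.mul_sum]
    apply Finset.sum_congr rfl
    intro k _
    simp [Pi.smul_apply]
  rw [Finset.sum_congr rfl (fun j _ => h1 j), Finset.sum_comm]
  apply Finset.sum_congr rfl
  intro k _
  rw [Finset.mul_sum]
  apply Finset.sum_congr rfl
  intro j _
  ring

lemma exists_nonorth (d : ℕ) (I : Finset (Fin d → ℤ)) (hgen : IsGenerator d I)
    {m : Fin d → ℤ} (hm : m ≠ 0) : ∃ n ∈ I, ipZ d m n ≠ 0 := by
  by_contra h
  push_neg at h
  apply hm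
  apply ipZ_self_eq_zero d
  obtain ⟨a, ha⟩ := hgen m
  calc ipZ d m m = ipZ d m (∑ k ∈ I, a k • k) := by rw [← ha]
    _ = ∑ k ∈ I, a k * ipZ d m k := ipZ_sum_right d m I a
    _ = 0 := Finset.sum_eq_zero (fun k hk => by rw [h k hk, mul_zero])

lemma main_mem (d : ℕ) (I : Finset (Fin d → ℤ)) (hI : ∀ k ∈ I, k ≠ 0)
    (hgen : IsGenerator d I) (hconn : ConnectedSet d I) (m : Fin d → ℤ) :
    m ∈ Sgood d I := by
  have key : ∀ N : ℕ, ∀ a : (Fin d → ℤ) → ℤ, (∑ k ∈ I, (a k).natAbs) = N →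
      (∑ k ∈ I, a k • k) ∈ Sgood d I := by
    intro N
    induction N using Nat.strong_induction_on with
    | _ N ihN =>
      intro a ha
      by_cases hz : ∀ k ∈ I, a k = 0
      · have h0 : ∑ k ∈ I, a k • k = 0 :=
          Finset.sum_eq_zero (fun k hk => by rw [hz k hk, zero_smul])
        rw [h0]
        exact S_zero d I
      · push_neg at hz
        obtain ⟨k0, hk0I, hk0⟩ := hz
        set ε : ℤ := if 0 < a k0 then 1 else -1 with hε
        have hε0 : ε ≠ 0 := by rw [hε]; split_ifs <;> norm_num
        set a' := Function.update a k0 (a k0 - ε) with ha'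
        have hsum : ∑ k ∈ I, a k • k = a k0 • k0 + ∑ k ∈ I.erase k0, a k • k :=
          (Finset.add_sum_erase I (fun k => a k • k) hk0I).symm
        have hsum' : ∑ k ∈ I, a' k • k = a' k0 • k0 + ∑ k ∈ I.erase k0, a' k • k :=
          (Finset.add_sum_erase I (fun k => a' k • k) hk0I).symm
        have herase : ∑ k ∈ I.erase k0, a' k • k = ∑ k ∈ I.erase k0, a k • k := by
          apply Finset.sum_congr rfl
          intro k hk
          rw [ha', Function.update_of_ne (Finset.ne_of_mem_erase hk)]
        have ha'k0 : a' k0 = a k0 - ε := by rw [ha', Function.update_self]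
        have hdiff : ∑ k ∈ I, a' k • k = (∑ k ∈ I, a k • k) - ε • k0 := by
          rw [hsum, hsum', herase, ha'k0, sub_smul]
          abel
        -- natAbs decreases
        have hnatAbs : (a k0 - ε).natAbs < (a k0).natAbs := by
          rw [hε]
          split_ifs with h <;> omega
        have hNa : ∑ k ∈ I, (a k).natAbs
            = (a k0).natAbs + ∑ k ∈ I.erase k0, (a k).natAbs :=
          (Finset.add_sum_erase I (fun k => (a k).natAbs) hk0I).symm
        have hNa' : ∑ k ∈ I, (a' k).natAbs
            = (a' k0).natAbs + ∑ k ∈ I.erase k0, (a' k).natAbs :=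
          (Finset.add_sum_erase I (fun k => (a' k).natAbs) hk0I).symm
        have heraseN : ∑ k ∈ I.erase k0, (a' k).natAbs
            = ∑ k ∈ I.erase k0, (a k).natAbs := by
          apply Finset.sum_congr rfl
          intro k hk
          rw [ha', Function.update_of_ne (Finset.ne_of_mem_erase hk)]
        have hlt : ∑ k ∈ I, (a' k).natAbs < N := by
          rw [hNa', heraseN, ha'k0, ← ha, hNa]
          omega
        have hm' : (∑ k ∈ I, a' k • k) ∈ Sgood d I := ihN _ hlt a' rfl
        set m' := ∑ k ∈ I, a' k • k with hm'def
        have hmeq : ∑ k ∈ I, a k • k = m' + ε • k0 := by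
          rw [hdiff]
          abel
        have hεk0S : ε • k0 ∈ Sgood d I :=
          S_smul d I (hI k0 hk0I) (S_base d I hk0I) ε
        rw [hmeq]
        by_cases hm'0 : m' = 0
        · rw [hm'0, zero_add]
          exact hεk0S
        · obtain ⟨n0, hn0I, hn0⟩ := exists_nonorth d I hgen hm'0
          obtain ⟨kk, n, hnI, hfirst, hcons, hlastlink⟩ := hconn n0 hn0I k0 hk0I
          set N' : Fin (kk+1+1) → (Fin d → ℤ) := Fin.cases n0 n with hN'
          apply walk d I hI (kk+1) N' ?_ m' (ε • k0) hm' hεk0S ?_ ?_ ?_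
          · intro j
            induction j using Fin.cases with
            | zero => exact hn0I
            | succ i => exact hnI i
          · show ipZ d m' (N' 0) ≠ 0
            have : N' 0 = n0 := rfl
            rw [this]
            exact hn0
          · intro j
            induction j using Fin.cases with
            | zero =>
              have e1 : N' ((0 : Fin (kk+1)).castSucc) = n0 := rfl
              have e2 : N' ((0 : Fin (kk+1)).succ) = n 0 := by
                exact Fin.cases_succ (0 : Fin (kk+1))
              rw [e1, e2]
              exact hfirst
            | succ i =>
              have e1 : N' ((i.succ).castSucc) = n i.castSucc := by
                rw [← Fin.succ_castSucc]
                exact Fin.cases_succ i.castSucc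
              have e2 : N' ((i.succ).succ) = n i.succ := Fin.cases_succ i.succ
              rw [e1, e2]
              exact hcons i
          · have e3 : N' (Fin.last (kk+1)) = n (Fin.last kk) := by
              have h4 : (Fin.last (kk+1)) = (Fin.last kk).succ := (Fin.succ_last kk).symm
              rw [h4]
              exact Fin.cases_succ (Fin.last kk)
            rw [e3, ipZ_smul_right]
            exact mul_ne_zero hε0 hlastlink
  obtain ⟨a, ha⟩ := hgen m
  rw [ha]
  exact key _ a rfl

/-- if I is a generator and satisfies the connectedness
condition, then c_m, s_m ∈ H_∞(I) for every m ∈ ℤ^d. -/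
theorem stmt8 (d : ℕ) (hd : 1 ≤ d) (I : Finset (Fin d → ℤ)) (hI : ∀ k ∈ I, k ≠ 0)
    (hgen : IsGenerator d I) (hconn : ConnectedSet d I) (m : Fin d → ℤ) :
    cmap d m ∈ Hinf d I ∧ smap d m ∈ Hinf d I := by
  obtain ⟨j, hc, hs⟩ := main_mem d I hI hgen hconn m
  exact ⟨Set.mem_iUnion.mpr ⟨j, hc⟩, Set.mem_iUnion.mpr ⟨j, hs⟩⟩
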